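/- Let x₁,…,x_q be points contained in an open half-sphere of S^n ⊂ ℝ^{n+1}, and suppose the closed balls B̄(x_i, r_i) (for the angular distance) have a common point. Then the spherical convex hull SCH(x₁,…,x_q) is contained in ⋃_{i=1}^q B̄(x_i, r_i). -/

import Mathlib

open scoped RealInnerProductSpace

/-- Spherical convex hull lemma: if points `x₁,…,x_q` lie in an open
half-sphere and the closed balls `B̄(xᵢ, rᵢ)` (angular distance
`arccos⟪·,·⟫`) have a common point, then every point of the spherical
convex hull `(Σλᵢxᵢ)/‖Σλᵢxᵢ‖` lies in some `B̄(xᵢ, rᵢ)`. -/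
theorem stmt_6 (n q : ℕ) (hq : 0 < q)
    (x : Fin q → EuclideanSpace ℝ (Fin (n + 1))) (r : Fin q → ℝ)
    (hx : ∀ i, ‖x i‖ = 1)
    (hhalf : ∃ v : EuclideanSpace ℝ (Fin (n + 1)), ∀ i, 0 < ⟪v, x i⟫)
    (hcommon : ∃ y : EuclideanSpace ℝ (Fin (n + 1)), ‖y‖ = 1 ∧
      ∀ i, Real.arccos ⟪x i, y⟫ ≤ r i)
    (l : Fin q → ℝ) (hl : ∀ i, 0 ≤ l i) (hsum : ∑ i, l i = 1)
    (hw : (∑ i, l i • x i) ≠ 0) :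
    ∃ i, Real.arccos ⟪x i, ‖∑ j, l j • x j‖⁻¹ • ∑ j, l j • x j⟫ ≤ r i := by
  obtain ⟨y, hy, hry⟩ := hcommon
  set w := ∑ j, l j • x j with hwdef
  set z := ‖w‖⁻¹ • w with hzdef
  have hwpos : 0 < ‖w‖ := norm_pos_iff.mpr hw
  have hwz : ⟪w, z⟫ = ‖w‖ := by
    rw [hzdef, real_inner_smul_right, real_inner_self_eq_norm_sq]
    field_simp
  have hwy : ⟪w, y⟫ ≤ ‖w‖ := by
    calc ⟪w, y⟫ ≤ ‖w‖ * ‖y‖ := real_inner_le_norm w y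
    _ = ‖w‖ := by rw [hy, mul_one]
  have h1 : ∑ i, l i * ⟪x i, y⟫ = ⟪w, y⟫ := by
    rw [hwdef, sum_inner]; simp [real_inner_smul_left, Finset.mul_sum, mul_assoc]
  have h2 : ∑ i, l i * ⟪x i, z⟫ = ⟪w, z⟫ := by
    rw [hwdef, sum_inner]; simp [real_inner_smul_left, Finset.mul_sum, mul_assoc]
  have hsum' : ∑ i, l i * ⟪x i, y⟫ ≤ ∑ i, l i * ⟪x i, z⟫ := by
    rw [h1, h2, hwz]; exact hwy
  by_contra hcon
  push_neg at hcon
  have hlt : ∀ i, l i ≠ 0 → ⟪x i, z⟫ < ⟪x i, y⟫ := by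
    intro i hi
    by_contra h'
    push_neg at h'
    have hbound : -1 ≤ ⟪x i, y⟫ := by
      have := abs_real_inner_le_norm (x i) y
      rw [hx i, hy, one_mul] at this
      linarith [abs_le.mp this]
    have : Real.arccos ⟪x i, z⟫ ≤ Real.arccos ⟪x i, y⟫ := by
      unfold Real.arccos
      have := Real.monotone_arcsin h'
      linarith
    exact absurd (this.trans (hry i)) (not_le.mpr (hcon i))
  -- derive strict inequality on the sums, contradiction
  obtain ⟨i₀, hi₀⟩ : ∃ i, l i ≠ 0 := by
    by_contra hall
    push_neg at hall
    simp [hall] at hsum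
  have hstrict : ∑ i, l i * ⟪x i, z⟫ < ∑ i, l i * ⟪x i, y⟫ := by
    apply Finset.sum_lt_sum
    · intro i _
      rcases eq_or_ne (l i) 0 with h0 | h0
      · simp [h0]
      · exact mul_le_mul_of_nonneg_left (hlt i h0).le (hl i)
    · refine ⟨i₀, Finset.mem_univ _, ?_⟩
      exact mul_lt_mul_of_pos_left (hlt i₀ hi₀) ((hl i₀).lt_of_ne (Ne.symm hi₀))
  linarith
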